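/- arXiv:1212.0069 — 4 statements merged into one kernel-verified Lean document; each statement's English description precedes it below -/
import Mathlib

section
/- Let {φ_{(t₁,…,t_k)}} be a smooth commutator-like k-parameter family of diffeomorphisms of a manifold P. Then the mixed partial derivative ∂^k φ_{(t₁,…,t_k)}/∂t₁⋯∂t_k evaluated at (0,…,0) is the first possibly non-vanishing derivative of the family at every point x ∈ P: all partial derivatives of φ_{(t₁,…,t_k)}(x) at 0 of order less than k vanish, and the k-th mixed derivative defines a smooth vector field on P. -/
noncomputable section

open Set

/-- Auxiliary smoothness lemma: for a family `ψ : (Fin k → ℝ) × P → F` smooth on `U ×ˢ univ`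
with `U` open containing `0`, the map `x ↦ D^n_t ψ(t,x)|_{t=0} (w)` is smooth in `x`. -/
lemma aux_param_smooth {P : Type u} [NormedAddCommGroup P] [NormedSpace ℝ P] {k : ℕ}
    {U : Set (Fin k → ℝ)} (hU : IsOpen U) (h0 : (0 : Fin k → ℝ) ∈ U) :
    ∀ (n : ℕ) {F : Type u} [NormedAddCommGroup F] [NormedSpace ℝ F]
      (ψ : (Fin k → ℝ) × P → F),
      ContDiffOn ℝ (⊤ : ℕ∞) ψ (U ×ˢ (Set.univ : Set P)) →
      ∀ w : Fin n → (Fin k → ℝ),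
        ContDiff ℝ (⊤ : ℕ∞) (fun x : P => iteratedFDeriv ℝ n (fun t => ψ (t, x)) 0 w) := by
  intro n
  induction n with
  | zero =>
    intro F _ _ ψ hψ w
    have h1 : ContDiffOn ℝ (⊤ : ℕ∞) (fun x : P => ψ (0, x)) Set.univ :=
      hψ.comp ((contDiff_const.prodMk contDiff_id).contDiffOn) (fun x _ => ⟨h0, trivial⟩)
    have h2 : ContDiff ℝ (⊤ : ℕ∞) (fun x : P => ψ (0, x)) := contDiffOn_univ.mp h1
    simpa only [iteratedFDeriv_zero_apply] using h2
  | succ n IH =>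
    intro F _ _ ψ hψ w
    have hS : IsOpen (U ×ˢ (Set.univ : Set P)) := hU.prod isOpen_univ
    have hSu : UniqueDiffOn ℝ (U ×ˢ (Set.univ : Set P)) := hS.uniqueDiffOn
    set χ : (Fin k → ℝ) × P → ((Fin k → ℝ) →L[ℝ] F) := fun p =>
      (fderivWithin ℝ ψ (U ×ˢ (Set.univ : Set P)) p).comp
        (ContinuousLinearMap.inl ℝ (Fin k → ℝ) P) with hχdef
    have hχ : ContDiffOn ℝ (⊤ : ℕ∞) χ (U ×ˢ (Set.univ : Set P)) :=
      (hψ.fderivWithin hSu (by exact_mod_cast le_top)).clm_comp contDiffOn_const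
    have key : ∀ (x : P), ∀ y ∈ U,
        fderivWithin ℝ (fun t => ψ (t, x)) U y = χ (y, x) := by
      intro x y hy
      have hmem : (y, x) ∈ U ×ˢ (Set.univ : Set P) := ⟨hy, trivial⟩
      have hdiff : DifferentiableAt ℝ ψ (y, x) :=
        ((hψ.differentiableOn (by simp)) (y, x) hmem).differentiableAt (hS.mem_nhds hmem)
      have hcomp : HasFDerivAt (fun t => ψ (t, x))
          ((fderiv ℝ ψ (y, x)).comp (ContinuousLinearMap.inl ℝ (Fin k → ℝ) P)) y :=
        hdiff.hasFDerivAt.comp y (hasFDerivAt_prodMk_left y x)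
      rw [fderivWithin_of_isOpen hU hy, hcomp.fderiv, hχdef]
      simp only [fderivWithin_of_isOpen hS hmem]
    have main : ∀ x : P,
        iteratedFDeriv ℝ (n + 1) (fun t => ψ (t, x)) 0 w =
          (iteratedFDeriv ℝ n (fun t => χ (t, x)) 0 (Fin.init w)) (w (Fin.last n)) := by
      intro x
      have e1 : iteratedFDeriv ℝ (n + 1) (fun t => ψ (t, x)) 0 w =
          iteratedFDerivWithin ℝ (n + 1) (fun t => ψ (t, x)) U 0 w := by
        rw [iteratedFDerivWithin_of_isOpen (n + 1) hU h0]
      rw [e1, iteratedFDerivWithin_succ_apply_right hU.uniqueDiffOn h0]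
      have e2 : iteratedFDerivWithin ℝ n
            (fun y => fderivWithin ℝ (fun t => ψ (t, x)) U y) U 0 =
          iteratedFDerivWithin ℝ n (fun y => χ (y, x)) U 0 :=
        iteratedFDerivWithin_congr (fun y hy => key x y hy) h0 n
      rw [e2, iteratedFDerivWithin_of_isOpen n hU h0]
    have h3 : ContDiff ℝ (⊤ : ℕ∞)
        (fun x : P => iteratedFDeriv ℝ n (fun t => χ (t, x)) 0 (Fin.init w)) :=
      IH χ hχ (Fin.init w)
    have h4 : ContDiff ℝ (⊤ : ℕ∞) (fun x : P =>
        (iteratedFDeriv ℝ n (fun t => χ (t, x)) 0 (Fin.init w)) (w (Fin.last n))) :=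
      h3.clm_apply contDiff_const
    have heq : (fun x : P => iteratedFDeriv ℝ (n + 1) (fun t => ψ (t, x)) 0 w) =
        fun x : P =>
          (iteratedFDeriv ℝ n (fun t => χ (t, x)) 0 (Fin.init w)) (w (Fin.last n)) :=
      funext main
    rw [heq]
    exact h4

/-- for a smooth commutator-like `k`-parameter family `{φ_t}` of diffeomorphisms
of `P` (equal to the identity whenever some parameter vanishes), the mixed partial derivative
`∂^k φ/∂t₁⋯∂t_k |₀` is the first possibly non-vanishing derivative at every point: all
derivatives of positive order `< k` of `t ↦ φ_t(x)` vanish at `0`, and the `k`-th mixed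
derivative defines a smooth vector field on `P`. -/
theorem commutatorLike_first_nonvanishing_derivative
    {P : Type*} [NormedAddCommGroup P] [NormedSpace ℝ P] {k : ℕ}
    (ε : ℝ) (hε : 0 < ε) (φ : (Fin k → ℝ) → P → P)
    (hsmooth : ContDiffOn ℝ (⊤ : ℕ∞) (fun q : (Fin k → ℝ) × P => φ q.1 q.2)
      ({t | ∀ i, |t i| < ε} ×ˢ Set.univ))
    (hdiffeo : ∀ t, (∀ i, |t i| < ε) → Function.Bijective (φ t))
    (hcomm : ∀ t, (∀ i, |t i| < ε) → (∃ j, t j = 0) → φ t = id) :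
    (∀ x : P, ∀ m : ℕ, 1 ≤ m → m < k →
        iteratedFDeriv ℝ m (fun t => φ t x) 0 = 0) ∧
      ContDiff ℝ (⊤ : ℕ∞) (fun x : P =>
        iteratedFDeriv ℝ k (fun t => φ t x) 0 (fun i => Pi.single i 1)) := by
  set U : Set (Fin k → ℝ) := {t | ∀ i, |t i| < ε} with hUdef
  have hU : IsOpen U := by
    have : U = ⋂ i, (fun t : Fin k → ℝ => t i) ⁻¹' Metric.ball (0 : ℝ) ε := by
      ext t
      simp [hUdef, Real.dist_0_eq_abs]
    rw [this]
    exact isOpen_iInter_of_finite fun i =>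
      Metric.isOpen_ball.preimage (continuous_apply i)
  have h0 : (0 : Fin k → ℝ) ∈ U := by
    intro i; simpa using hε
  constructor
  · -- vanishing of lower derivatives
    intro x m hm1 hmk
    have hfU : ContDiffOn ℝ (⊤ : ℕ∞) (fun t => φ t x) U :=
      hsmooth.comp ((contDiff_id.prodMk contDiff_const).contDiffOn)
        (fun t ht => ⟨ht, trivial⟩)
    apply ContinuousMultilinearMap.toMultilinearMap_injective
    apply Module.Basis.ext_multilinear (fun _ => Pi.basisFun ℝ (Fin k))
    intro v
    -- find a missing coordinate
    have hnsurj : ¬ Function.Surjective v := by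
      intro hsurj
      have := Fintype.card_le_of_surjective v hsurj
      simp only [Fintype.card_fin] at this
      omega
    rw [Function.Surjective] at hnsurj
    push_neg at hnsurj
    obtain ⟨j, hj⟩ := hnsurj
    -- projection killing coordinate j
    set L : (Fin k → ℝ) →L[ℝ] (Fin k → ℝ) :=
      ContinuousLinearMap.pi (fun i =>
        if i = j then (0 : (Fin k → ℝ) →L[ℝ] ℝ) else ContinuousLinearMap.proj i) with hLdef
    have hLapp : ∀ (t : Fin k → ℝ) (i : Fin k), L t i = if i = j then 0 else t i := by
      intro t i
      rw [hLdef]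
      by_cases h : i = j <;> simp [ContinuousLinearMap.pi_apply, h]
    have hL0 : L 0 = 0 := map_zero L
    have hL0V : (0 : Fin k → ℝ) ∈ L ⁻¹' U := by
      simp only [Set.mem_preimage, hL0]; exact h0
    have hV : IsOpen (L ⁻¹' U) := hU.preimage L.continuous
    -- f ∘ L is constant on L ⁻¹' U
    have hconst : Set.EqOn ((fun t => φ t x) ∘ L) (fun _ => x) (L ⁻¹' U) := by
      intro t ht
      have h1 : ∀ i, |L t i| < ε := ht
      have h2 : (L t) j = 0 := by rw [hLapp]; simp
      have := hcomm (L t) h1 ⟨j, h2⟩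
      simp [Function.comp, this]
    -- compute
    have hcompL : iteratedFDerivWithin ℝ m ((fun t => φ t x) ∘ L) (L ⁻¹' U) 0 =
        (iteratedFDerivWithin ℝ m (fun t => φ t x) U (L 0)).compContinuousLinearMap
          (fun _ => L) :=
      L.iteratedFDerivWithin_comp_right hfU hU.uniqueDiffOn hV.uniqueDiffOn
        (by rw [hL0]; exact h0) (by exact_mod_cast le_top)
    have hzero : iteratedFDerivWithin ℝ m ((fun t => φ t x) ∘ L) (L ⁻¹' U) 0 = 0 := by
      rw [iteratedFDerivWithin_congr hconst hL0V m,
        iteratedFDerivWithin_of_isOpen m hV hL0V]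
      exact congrFun (iteratedFDeriv_const_of_ne (E := Fin k → ℝ) (𝕜 := ℝ) (Nat.one_le_iff_ne_zero.mp hm1) x) 0
    have hfix : ∀ s : Fin m, L (Pi.single (v s) (1 : ℝ)) = Pi.single (v s) 1 := by
      intro s
      funext i
      rw [hLapp]
      by_cases h : i = j
      · subst h
        rw [if_pos rfl]
        exact (Pi.single_eq_of_ne (M := fun _ : Fin k => ℝ) (Ne.symm (hj s)) 1).symm
      · simp [h]
    have happ : (iteratedFDeriv ℝ m (fun t => φ t x) 0)
        (fun s => Pi.single (v s) (1 : ℝ)) = 0 := by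
      rw [← iteratedFDerivWithin_of_isOpen m hU h0]
      have : (iteratedFDerivWithin ℝ m (fun t => φ t x) U 0)
          (fun s => Pi.single (v s) (1 : ℝ)) =
          (iteratedFDerivWithin ℝ m (fun t => φ t x) U (L 0)).compContinuousLinearMap
            (fun _ => L) (fun s => Pi.single (v s) (1 : ℝ)) := by
        rw [hL0]
        simp only [ContinuousMultilinearMap.compContinuousLinearMap_apply]
        congr 1
        funext s
        rw [hfix s]
      rw [this, ← hcompL, hzero]
      rfl
    simpa [Pi.basisFun_apply] using happ
  · -- smoothness of the k-th mixed derivative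
    exact aux_param_smooth hU h0 k (fun q : (Fin k → ℝ) × P => φ q.1 q.2) hsmooth
      (fun i => Pi.single i 1)
end
end

section
/- Let H be a subgroup of Diff^∞(P). The set of vector fields on P tangent to H is closed under real linear combinations: if X and Y are tangent to H and a, b ∈ ℝ, then aX + bY is tangent to H. -/
noncomputable section

/-- A vector field `X` on `P` is *tangent* to a subgroup `H` of the diffeomorphism group of `P`
if there is a `C¹`-differentiable 1-parameter family `{φ_t ∈ H}`, `t ∈ (-ε, ε)`, of
diffeomorphisms with `φ₀ = Id` and `∂φ_t/∂t|_{t=0} = X`. -/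
def IsTangentTo {P : Type*} [NormedAddCommGroup P] [NormedSpace ℝ P]
    (H : Set (P → P)) (X : P → P) : Prop :=
  ∃ ε > (0 : ℝ), ∃ φ : ℝ → P → P,
    ContDiffOn ℝ 1 (fun q : ℝ × P => φ q.1 q.2) ({t | |t| < ε} ×ˢ Set.univ) ∧
    (∀ t, |t| < ε → φ t ∈ H) ∧
    φ 0 = id ∧
    ∀ x, HasDerivAt (fun t => φ t x) (X x) 0

/-- For a subgroup `H` of `Diff^∞(P)`, the set of vector fields tangent to `H`
is closed under real linear combinations. -/
theorem tangent_linear_combination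
    {P : Type*} [NormedAddCommGroup P] [NormedSpace ℝ P]
    (H : Set (P → P))
    (hid : id ∈ H)
    (hcomp : ∀ f ∈ H, ∀ g ∈ H, f ∘ g ∈ H)
    (hinv : ∀ f ∈ H, ∃ g ∈ H, g ∘ f = id ∧ f ∘ g = id)
    (X Y : P → P) (a b : ℝ)
    (hX : IsTangentTo H X) (hY : IsTangentTo H Y) :
    IsTangentTo H (a • X + b • Y) := by
  obtain ⟨ε₁, hε₁, φ, hφc, hφH, hφ0, hφd⟩ := hX
  obtain ⟨ε₂, hε₂, ψ, hψc, hψH, hψ0, hψd⟩ := hY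
  have ha1 : (0:ℝ) < |a| + 1 := by positivity
  have hb1 : (0:ℝ) < |b| + 1 := by positivity
  set ε : ℝ := min (ε₁ / (|a| + 1)) (ε₂ / (|b| + 1)) with hεdef
  have hεpos : 0 < ε := lt_min (by positivity) (by positivity)
  have hta : ∀ t : ℝ, |t| < ε → |a * t| < ε₁ := by
    intro t ht
    have h1 : |t| < ε₁ / (|a| + 1) := lt_of_lt_of_le ht (min_le_left _ _)
    have h2 : (|a| + 1) * |t| < ε₁ := by
      rw [← lt_div_iff₀' ha1]; exact h1
    calc |a * t| = |a| * |t| := abs_mul a t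
      _ ≤ (|a| + 1) * |t| := by nlinarith [abs_nonneg t]
      _ < ε₁ := h2
  have htb : ∀ t : ℝ, |t| < ε → |b * t| < ε₂ := by
    intro t ht
    have h1 : |t| < ε₂ / (|b| + 1) := lt_of_lt_of_le ht (min_le_right _ _)
    have h2 : (|b| + 1) * |t| < ε₂ := by
      rw [← lt_div_iff₀' hb1]; exact h1
    calc |b * t| = |b| * |t| := abs_mul b t
      _ ≤ (|b| + 1) * |t| := by nlinarith [abs_nonneg t]
      _ < ε₂ := h2
  have hopen : ∀ e : ℝ, IsOpen ({t : ℝ | |t| < e} ×ˢ (Set.univ : Set P)) := by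
    intro e
    exact (IsOpen.preimage continuous_abs isOpen_Iio).prod isOpen_univ
  refine ⟨ε, hεpos, fun t => φ (a * t) ∘ ψ (b * t), ?_, ?_, ?_, ?_⟩
  · -- smoothness
    have hg : ContDiffOn ℝ 1 (fun q : ℝ × P => ψ (b * q.1) q.2)
        ({t : ℝ | |t| < ε} ×ˢ (Set.univ : Set P)) := by
      have hlin : ContDiff ℝ 1 (fun q : ℝ × P => ((b * q.1, q.2) : ℝ × P)) :=
        ((contDiff_fst.const_smul b).prodMk contDiff_snd).of_le le_top
      refine hψc.comp hlin.contDiffOn ?_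
      rintro ⟨t, p⟩ ⟨ht, -⟩
      exact ⟨htb t ht, Set.mem_univ _⟩
    have hinner : ContDiffOn ℝ 1 (fun q : ℝ × P => ((a * q.1, ψ (b * q.1) q.2) : ℝ × P))
        ({t : ℝ | |t| < ε} ×ˢ (Set.univ : Set P)) := by
      exact ((contDiff_fst.const_smul a).of_le le_top).contDiffOn.prodMk hg
    have := hφc.comp hinner ?_
    · exact this
    · rintro ⟨t, p⟩ ⟨ht, -⟩
      exact ⟨hta t ht, Set.mem_univ _⟩
  · -- membership in H
    intro t ht
    exact hcomp _ (hφH _ (hta t ht)) _ (hψH _ (htb t ht))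
  · -- value at 0
    simp [hφ0, hψ0]
  · -- derivative at 0
    intro x
    set F : ℝ × P → P := fun q => φ q.1 q.2 with hFdef
    have hmem : ((0 : ℝ), x) ∈ {t : ℝ | |t| < ε₁} ×ˢ (Set.univ : Set P) :=
      ⟨by simpa using hε₁, Set.mem_univ _⟩
    have hFat : ContDiffAt ℝ 1 F (0, x) :=
      hφc.contDiffAt ((hopen ε₁).mem_nhds hmem)
    have hFd : HasFDerivAt F (fderiv ℝ F (0, x)) (0, x) :=
      (hFat.differentiableAt one_ne_zero).hasFDerivAt
    set f' := fderiv ℝ F (0, x) with hf'def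
    -- f' (1, 0) = X x
    have hcurve1 : HasDerivAt (fun t : ℝ => ((t, x) : ℝ × P)) ((1 : ℝ), (0 : P)) 0 :=
      (hasDerivAt_id 0).prodMk (hasDerivAt_const 0 x)
    have h10 : f' (1, 0) = X x := by
      have h1 : HasDerivAt (fun t : ℝ => F (t, x)) (f' (1, 0)) 0 :=
        by have := hFd.comp_hasDerivAt 0 hcurve1; exact this
      exact h1.unique (hφd x)
    -- f' (0, v) = v
    have h0v : ∀ v : P, f' (0, v) = v := by
      intro v
      have hcurve2 : HasFDerivAt (fun p : P => ((0 : ℝ), p) : P → ℝ × P)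
          (ContinuousLinearMap.inr ℝ ℝ P) x :=
        (ContinuousLinearMap.inr ℝ ℝ P).hasFDerivAt
      have h2 : HasFDerivAt (fun p : P => F (0, p))
          (f'.comp (ContinuousLinearMap.inr ℝ ℝ P)) x := hFd.comp x hcurve2
      have h3 : (fun p : P => F (0, p)) = fun p => p := by
        funext p; simp [hFdef, hφ0]
      rw [h3] at h2
      have h4 : f'.comp (ContinuousLinearMap.inr ℝ ℝ P) = ContinuousLinearMap.id ℝ P :=
        h2.unique (hasFDerivAt_id x)
      have := DFunLike.congr_fun h4 v
      simpa using this
    -- derivative of t ↦ ψ (b * t) x at 0 is b • Y x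
    have hψb : HasDerivAt (fun t : ℝ => ψ (b * t) x) (b • Y x) 0 := by
      have hb' : HasDerivAt (fun t : ℝ => b * t) b 0 := by
        simpa using (hasDerivAt_id (0:ℝ)).const_mul b
      have hg : HasDerivAt (fun t => ψ t x) (Y x) ((fun t : ℝ => b * t) 0) := by
        simpa using hψd x
      have := HasDerivAt.scomp (𝕜 := ℝ) (𝕜' := ℝ) (x := (0:ℝ))
        (h := fun t : ℝ => b * t) hg hb'
      simpa [Function.comp_def] using this
    -- curve t ↦ (a*t, ψ (b*t) x)
    have ha' : HasDerivAt (fun t : ℝ => a * t) a 0 := by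
      simpa using (hasDerivAt_id (0:ℝ)).const_mul a
    have hcurve : HasDerivAt (fun t : ℝ => ((a * t, ψ (b * t) x) : ℝ × P))
        ((a, b • Y x) : ℝ × P) 0 := ha'.prodMk hψb
    have hcurve0 : (fun t : ℝ => ((a * t, ψ (b * t) x) : ℝ × P)) 0 = ((0 : ℝ), x) := by
      simp [hψ0]
    have hFd' : HasFDerivAt F f' ((fun t : ℝ => ((a * t, ψ (b * t) x) : ℝ × P)) 0) := by
      rw [hcurve0]; exact hFd
    have hmain : HasDerivAt (fun t : ℝ => F (a * t, ψ (b * t) x)) (f' (a, b • Y x)) 0 :=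
      by have := hFd'.comp_hasDerivAt 0 hcurve; exact this
    have hval : f' (a, b • Y x) = (a • X + b • Y) x := by
      have : ((a, b • Y x) : ℝ × P) = a • ((1 : ℝ), (0 : P)) + ((0 : ℝ), b • Y x) := by
        simp [Prod.ext_iff]
      rw [this, map_add, map_smul, h10, h0v]
      simp
    rw [← hval]
    exact hmain
end
end

section
/- Every vector field ξ on the indicatrix bundle 𝓘M that is strongly tangent to the fibred holonomy group Hol_f(M) is vertical, i.e. π_*(ξ) = 0, and its restriction ξ_p = ξ|_{𝓘_pM} to each indicatrix fibre is strongly tangent to the holonomy group Hol(p). -/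
noncomputable section

abbrev Vec (n : ℕ) := Fin n → ℝ

/-- `τ s` is the nonlinear parallel translation from `c 0` to `c s` along the curve `c`,
with respect to the nonlinear connection coefficients `N = (G^i_j)`:
the translated vectors `t ↦ τ t y₀` solve `dX^i/dt + G^i_j(c(t), X(t)) ċ^j(t) = 0`. -/
def IsParallelTransport {n : ℕ} (N : Vec n → Vec n → Fin n → Fin n → ℝ)
    (c : ℝ → Vec n) (τ : ℝ → Vec n → Vec n) : Prop :=
  (∀ y0, τ 0 y0 = y0) ∧
  ∀ y0 t, HasDerivAt (fun s => τ s y0)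
    (fun i => -(∑ j, N (c t) (τ t y0) i j * deriv c t j)) t

/-- The parallel translations along smooth loops based at `p`. -/
def loopTranslations {n : ℕ} (N : Vec n → Vec n → Fin n → Fin n → ℝ)
    (p : Vec n) : Set (Function.End (Vec n)) :=
  {φ | ∃ (c : ℝ → Vec n) (τ : ℝ → Vec n → Vec n),
    ContDiff ℝ (⊤ : ℕ∞) c ∧ c 0 = p ∧ c 1 = p ∧
    IsParallelTransport N c τ ∧ φ = τ 1}

/-- The holonomy group at `p`: the group of transformations of the fibre generated by
parallel translations along (piecewise smooth) loops at `p`, realized as the closure of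
the set of loop translations under composition. -/
def holonomy {n : ℕ} (N : Vec n → Vec n → Fin n → Fin n → ℝ)
    (p : Vec n) : Submonoid (Function.End (Vec n)) :=
  Submonoid.closure (loopTranslations N p)

/-- The fibred holonomy group: fibre preserving transformations of the indicatrix bundle
whose restriction to each fibre belongs to the holonomy group of that fibre. -/
def fibredHolonomy {n : ℕ} (N : Vec n → Vec n → Fin n → Fin n → ℝ) :
    Set (Vec n × Vec n → Vec n × Vec n) :=
  {Φ | (∀ q, (Φ q).1 = q.1) ∧ ∀ p, (fun y => (Φ (p, y)).2) ∈ holonomy N p}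

/-- A vector field `X` on `P` is *strongly tangent* to a set `H` of transformations of `P`
if there is a smooth commutator-like `k`-parameter family `{φ_{(t₁,…,t_k)} ∈ H}` (a family
which is the identity whenever some parameter vanishes) whose `k`-th mixed derivative at `0`
equals `X`. -/
def IsStronglyTangentTo {P : Type*} [NormedAddCommGroup P] [NormedSpace ℝ P]
    (H : Set (P → P)) (X : P → P) : Prop :=
  ∃ (k : ℕ), 0 < k ∧ ∃ ε > (0 : ℝ), ∃ φ : (Fin k → ℝ) → P → P,
    ContDiffOn ℝ (⊤ : ℕ∞) (fun q : (Fin k → ℝ) × P => φ q.1 q.2)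
      ({t | ∀ i, |t i| < ε} ×ˢ Set.univ) ∧
    (∀ t, (∀ i, |t i| < ε) → φ t ∈ H) ∧
    (∀ t, (∀ i, |t i| < ε) → (∃ j, t j = 0) → φ t = id) ∧
    ∀ x, iteratedFDeriv ℝ k (fun t => φ t x) 0 (fun i => Pi.single i 1) = X x


section
variable {E F G : Type*} [NormedAddCommGroup E] [NormedSpace ℝ E]
  [NormedAddCommGroup F] [NormedSpace ℝ F] [NormedAddCommGroup G] [NormedSpace ℝ G]

lemma comp_left_iteratedFDeriv_of_isOpen (g : F →L[ℝ] G) {f : E → F} {U : Set E}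
    (hU : IsOpen U) {x : E} (hx : x ∈ U) (hf : ContDiffOn ℝ (⊤ : ℕ∞) f U) (k : ℕ) :
    iteratedFDeriv ℝ k (g ∘ f) x = g.compContinuousMultilinearMap (iteratedFDeriv ℝ k f x) := by
  rw [← iteratedFDerivWithin_of_isOpen k hU hx, ← iteratedFDerivWithin_of_isOpen (f := f) k hU hx,
    g.iteratedFDerivWithin_comp_left (hf x hx) hU.uniqueDiffOn hx (mod_cast le_top)]
end

/-- every vector field `ξ` on the indicatrix bundle strongly tangent to the
fibred holonomy group is vertical (`π_* ξ = 0`), and its restriction to each indicatrix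
fibre is strongly tangent to the holonomy group of that fibre. -/
theorem stronglyTangent_fibred_vertical_and_fibrewise {n : ℕ}
    (N : Vec n → Vec n → Fin n → Fin n → ℝ)
    (ξ : Vec n × Vec n → Vec n × Vec n)
    (hξ : IsStronglyTangentTo (fibredHolonomy N) ξ) :
    (∀ q : Vec n × Vec n, (ξ q).1 = 0) ∧
    ∀ p : Vec n, IsStronglyTangentTo
      ((holonomy N p : Set (Function.End (Vec n))))
      (fun y => (ξ (p, y)).2) := by
  obtain ⟨k, hk, ε, hε, φ, hsm, hmem, hid, hder⟩ := hξ
  set U : Set (Fin k → ℝ) := {t | ∀ i, |t i| < ε} with hU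
  have hUopen : IsOpen U := by
    have : U = Metric.ball (0 : Fin k → ℝ) ε := by
      ext t
      simp [hU, Metric.mem_ball, dist_zero_right, pi_norm_lt_iff hε, Real.norm_eq_abs]
    rw [this]; exact Metric.isOpen_ball
  have h0 : (0 : Fin k → ℝ) ∈ U := fun i => by simpa using hε
  have hfx : ∀ x : Vec n × Vec n, ContDiffOn ℝ (⊤ : ℕ∞) (fun t => φ t x) U := by
    intro x
    exact hsm.comp ((contDiff_id.prodMk contDiff_const).contDiffOn)
      (fun t ht => ⟨ht, Set.mem_univ _⟩)
  constructor
  · intro q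
    have e1 := comp_left_iteratedFDeriv_of_isOpen
      (ContinuousLinearMap.fst ℝ (Vec n) (Vec n)) hUopen h0 (hfx q) k
    have e2 : Set.EqOn ((ContinuousLinearMap.fst ℝ (Vec n) (Vec n)) ∘ fun t => φ t q)
        (fun _ => q.1) U := fun t ht => (hmem t ht).1 q
    have e3 : iteratedFDeriv ℝ k ((ContinuousLinearMap.fst ℝ (Vec n) (Vec n)) ∘ fun t => φ t q) 0
        = 0 := by
      rw [← iteratedFDerivWithin_of_isOpen k hUopen h0, iteratedFDerivWithin_congr e2 h0,
        iteratedFDerivWithin_of_isOpen k hUopen h0, iteratedFDeriv_const_of_ne hk.ne']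
      rfl
    have : (ξ q).1 = ((ContinuousLinearMap.fst ℝ (Vec n) (Vec n)).compContinuousMultilinearMap
        (iteratedFDeriv ℝ k (fun t => φ t q) 0)) (fun i => Pi.single i 1) := by
      rw [← hder q]; rfl
    rw [this, ← e1, e3]
    rfl
  · intro p
    refine ⟨k, hk, ε, hε, fun t y => (φ t (p, y)).2, ?_, ?_, ?_, ?_⟩
    · have hm : ContDiff ℝ (⊤ : ℕ∞)
          (fun q : (Fin k → ℝ) × Vec n => (q.1, ((p, q.2) : Vec n × Vec n))) :=
        contDiff_fst.prodMk (contDiff_const.prodMk contDiff_snd)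
      have hcomp : ContDiffOn ℝ (⊤ : ℕ∞)
          (fun q : (Fin k → ℝ) × Vec n => φ q.1 (p, q.2)) (U ×ˢ Set.univ) := by
        refine hsm.comp hm.contDiffOn ?_
        rintro ⟨t, y⟩ ⟨ht, -⟩
        exact ⟨ht, Set.mem_univ _⟩
      exact hcomp.continuousLinearMap_comp (ContinuousLinearMap.snd ℝ (Vec n) (Vec n))
    · intro t ht
      exact (hmem t ht).2 p
    · intro t ht hj
      funext y
      show (φ t (p, y)).2 = y
      rw [hid t ht hj]
      rfl
    · intro y
      have e1 := comp_left_iteratedFDeriv_of_isOpen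
        (ContinuousLinearMap.snd ℝ (Vec n) (Vec n)) hUopen h0 (hfx (p, y)) k
      have : (fun t => (φ t (p, y)).2)
          = (ContinuousLinearMap.snd ℝ (Vec n) (Vec n)) ∘ (fun t => φ t (p, y)) := rfl
      rw [this, e1]
      show ((iteratedFDeriv ℝ k (fun t => φ t (p, y)) 0) fun i => Pi.single i 1).2
        = (ξ (p, y)).2
      rw [hder (p, y)]
end
end

section
/- Let γ = x(t) be a smooth curve in a Finsler manifold (M,F) and y(t) = τ_t y(0) a parallel vector field along γ with y(0) ∈ 𝓘_{x(0)}M. A vertical vector field ξ_t = ξ(x(t), y(t)) along (x(t),y(t)) equals the Berwald translate (τ_t)_* ξ₀ ∘ τ_t⁻¹ for all t if and only if its Berwald horizontal covariant derivative along γ vanishes: (∂ξ^i/∂x^j − G^k_j ∂ξ^i/∂y^k + G^i_{jk} ξ^k) ẋ^j = 0. -/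
noncomputable section

open Set Real MeasureTheory Filter Topology Metric intervalIntegral

def pderiv2 {n : ℕ} (H : ℝ × Vec n → Vec n) (t : ℝ) (v : Vec n) : Vec n →L[ℝ] Vec n :=
  (fderiv ℝ H (t, v)).comp (ContinuousLinearMap.inr ℝ ℝ (Vec n))

lemma hasFDerivAt_pderiv2 {n : ℕ} {H : ℝ × Vec n → Vec n} (hH : ContDiff ℝ (⊤:ℕ∞) H)
    (t : ℝ) (v : Vec n) :
    HasFDerivAt (fun w => H (t, w)) (pderiv2 H t v) v := by
  have h1 : HasFDerivAt (fun w : Vec n => ((t, w) : ℝ × Vec n))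
      (ContinuousLinearMap.inr ℝ ℝ (Vec n)) v := hasFDerivAt_prodMk_right t v
  exact ((hH.differentiable (by simp) (t, v)).hasFDerivAt).comp v h1

lemma continuous_pderiv2 {n : ℕ} {H : ℝ × Vec n → Vec n} (hH : ContDiff ℝ (⊤:ℕ∞) H) :
    Continuous (fun p : ℝ × Vec n => pderiv2 H p.1 p.2) :=
  (hH.continuous_fderiv (by simp)).clm_comp continuous_const

set_option maxHeartbeats 2000000 in
theorem flow_fderiv_integral {n : ℕ} {H : ℝ × Vec n → Vec n} (hH : ContDiff ℝ (⊤:ℕ∞) H)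
    (τ : ℝ → Vec n → Vec n) (hτ0 : ∀ z, τ 0 z = z)
    (hode : ∀ z t, HasDerivAt (fun s => τ s z) (H (t, τ t z)) t)
    (hdiff : ∀ t, Differentiable ℝ (τ t))
    (y0 ξ0 : Vec n) {T : ℝ} (hT : 0 ≤ T) :
    ∃ C : ℝ, ∀ t ∈ Icc (0:ℝ) T,
      ‖fderiv ℝ (τ t) y0 ξ0‖ ≤ C ∧
      fderiv ℝ (τ t) y0 ξ0 = ξ0 + ∫ σ in (0:ℝ)..t,
        (pderiv2 H σ (τ σ y0)) (fderiv ℝ (τ σ) y0 ξ0) := by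
  set y : ℝ → Vec n := fun s => τ s y0 with hy_def
  have hycont : Continuous y :=
    continuous_iff_continuousAt.mpr fun s => (hode y0 s).continuousAt
  have hy0 : y 0 = y0 := hτ0 y0
  -- compact tube and Lipschitz constant
  set S : Set (Vec n) := y '' Icc 0 T with hS_def
  have hScomp : IsCompact S := isCompact_Icc.image hycont
  set tube : Set (Vec n) := Metric.cthickening 1 S with htube_def
  have htube_comp : IsCompact tube := hScomp.cthickening
  obtain ⟨K0, hK0⟩ := (isCompact_Icc.prod htube_comp).exists_bound_of_continuousOn
    (continuous_pderiv2 hH).continuousOn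
  set K : ℝ := max K0 0 with hK_def
  have hK0' : 0 ≤ K := le_max_right _ _
  have hball_tube : ∀ σ ∈ Icc (0:ℝ) T, closedBall (y σ) 1 ⊆ tube := by
    intro σ hσ x hx
    exact Metric.mem_cthickening_of_dist_le x (y σ) 1 S ⟨σ, hσ, rfl⟩ hx
  have hDbound : ∀ σ ∈ Icc (0:ℝ) T, ∀ x ∈ closedBall (y σ) 1, ‖pderiv2 H σ x‖ ≤ K :=
    fun σ hσ x hx => le_trans (hK0 (σ, x) ⟨hσ, hball_tube σ hσ hx⟩) (le_max_left _ _)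
  have hLip : ∀ σ ∈ Icc (0:ℝ) T, ∀ u ∈ closedBall (y σ) 1, ∀ w ∈ closedBall (y σ) 1,
      ‖H (σ, u) - H (σ, w)‖ ≤ K * ‖u - w‖ := by
    intro σ hσ u hu w hw
    exact (convex_closedBall _ _).norm_image_sub_le_of_norm_hasFDerivWithin_le
      (fun x hx => (hasFDerivAt_pderiv2 hH σ x).hasFDerivWithinAt)
      (fun x hx => hDbound σ hσ x hx) hw hu
  -- exponential closeness radius
  set rr : ℝ := Real.exp (-(K * T)) / 4 with hrr_def
  have hrr_pos : 0 < rr := by positivity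
  have hrr_exp : ∀ σ ∈ Icc (0:ℝ) T, rr * Real.exp (K * σ) ≤ 1/4 := by
    intro σ hσ
    have h1 : Real.exp (-(K * T)) * Real.exp (K * σ) ≤ 1 := by
      rw [← Real.exp_add]
      refine Real.exp_le_one_iff.mpr ?_
      nlinarith [hσ.2, hK0', mul_le_mul_of_nonneg_left hσ.2 hK0']
    calc rr * Real.exp (K * σ) = Real.exp (-(K * T)) * Real.exp (K * σ) / 4 := by ring
    _ ≤ 1/4 := by linarith
  -- Gronwall propagator, assuming the trajectory stays in the tube
  have grw : ∀ z, ∀ b ∈ Icc (0:ℝ) T, (∀ σ ∈ Icc (0:ℝ) b, τ σ z ∈ closedBall (y σ) 1) →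
      ∀ σ ∈ Icc (0:ℝ) b, ‖τ σ z - y σ‖ ≤ ‖z - y0‖ * Real.exp (K * σ) := by
    intro z b hb hmem
    have hcont : ContinuousOn (fun σ => τ σ z - y σ) (Icc 0 b) :=
      ((continuous_iff_continuousAt.mpr fun s => (hode z s).continuousAt).sub hycont).continuousOn
    have hderiv : ∀ x ∈ Ico (0:ℝ) b, HasDerivWithinAt (fun σ => τ σ z - y σ)
        (H (x, τ x z) - H (x, y x)) (Ici x) x :=
      fun x hx => (((hode z x).sub (hode y0 x)).hasDerivWithinAt)
    have h0 : ‖τ 0 z - y 0‖ ≤ ‖z - y0‖ := by rw [hτ0 z, hy0]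
    have hbnd : ∀ x ∈ Ico (0:ℝ) b, ‖H (x, τ x z) - H (x, y x)‖
        ≤ K * ‖τ x z - y x‖ + 0 := by
      intro x hx
      rw [add_zero]
      have hxT : x ∈ Icc (0:ℝ) T := ⟨hx.1, le_trans (le_of_lt hx.2) hb.2⟩
      exact hLip x hxT (τ x z) (hmem x ⟨hx.1, le_of_lt hx.2⟩) (y x)
        (Metric.mem_closedBall_self (by norm_num))
    intro σ hσ
    have := norm_le_gronwallBound_of_norm_deriv_right_le hcont hderiv h0 hbnd σ hσ
    rwa [gronwallBound_ε0, sub_zero] at this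
  -- bootstrap: trajectories starting close to y0 stay in the tube
  have stay : ∀ z, ‖z - y0‖ ≤ rr → ∀ σ ∈ Icc (0:ℝ) T,
      ‖τ σ z - y σ‖ ≤ ‖z - y0‖ * Real.exp (K * σ) := by
    intro z hz
    have hgzcont : Continuous (fun σ => ‖τ σ z - y σ‖) :=
      ((continuous_iff_continuousAt.mpr fun s => (hode z s).continuousAt).sub hycont).norm
    set gz : ℝ → ℝ := fun σ => ‖τ σ z - y σ‖ with hgz_def
    have hzhalf : ‖z - y0‖ ≤ 1/4 := by
      have := hrr_exp 0 ⟨le_rfl, hT⟩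
      simp only [mul_zero, Real.exp_zero, mul_one] at this
      linarith
    set A : Set ℝ := {b | b ∈ Icc (0:ℝ) T ∧ ∀ σ ∈ Icc (0:ℝ) b, gz σ ≤ 1/2} with hA_def
    have h0A : (0:ℝ) ∈ A := by
      refine ⟨⟨le_rfl, hT⟩, ?_⟩
      intro σ hσ
      have : σ = 0 := le_antisymm hσ.2 hσ.1
      subst this
      have : gz 0 = ‖z - y0‖ := by simp only [hgz_def, hτ0 z, hy0]
      rw [this]; linarith
    have hbddA : BddAbove A := ⟨T, fun x hx => hx.1.2⟩
    set u := sSup A with hu_def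
    have huIcc : u ∈ Icc (0:ℝ) T :=
      ⟨le_csSup hbddA h0A, csSup_le ⟨0, h0A⟩ fun x hx => hx.1.2⟩
    have hlt : ∀ σ ∈ Ico (0:ℝ) u, gz σ ≤ 1/2 := by
      intro σ hσ
      obtain ⟨a, haA, hsa⟩ := exists_lt_of_lt_csSup ⟨0, h0A⟩ hσ.2
      exact haA.2 σ ⟨hσ.1, le_of_lt hsa⟩
    have huA : u ∈ A := by
      refine ⟨huIcc, ?_⟩
      intro σ hσ
      rcases lt_or_eq_of_le hσ.2 with h | h
      · exact hlt σ ⟨hσ.1, h⟩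
      · rw [h]
        rcases eq_or_lt_of_le huIcc.1 with h0 | h0
        · rw [← h0]
          have : gz 0 = ‖z - y0‖ := by simp only [hgz_def, hτ0 z, hy0]
          rw [this]; linarith
        · have htd : Tendsto gz (𝓝[<] u) (𝓝 (gz u)) :=
            (hgzcont.continuousAt).tendsto.mono_left nhdsWithin_le_nhds
          refine le_of_tendsto htd ?_
          filter_upwards [Ioo_mem_nhdsLT_of_mem (⟨h0, le_rfl⟩ : u ∈ Ioc 0 u)] with x hx
          exact hlt x ⟨le_of_lt hx.1, hx.2⟩
    have hmemu : ∀ σ ∈ Icc (0:ℝ) u, τ σ z ∈ closedBall (y σ) 1 := by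
      intro σ hσ
      rw [Metric.mem_closedBall, dist_eq_norm]
      exact le_trans (huA.2 σ hσ) (by norm_num)
    have huT : u = T := by
      by_contra hne
      have hu_lt : u < T := lt_of_le_of_ne huIcc.2 hne
      have hq := grw z u huIcc hmemu u ⟨huIcc.1, le_rfl⟩
      have h14 : gz u ≤ 1/4 := by
        refine le_trans hq ?_
        calc ‖z - y0‖ * Real.exp (K * u) ≤ rr * Real.exp (K * u) :=
              mul_le_mul_of_nonneg_right hz (Real.exp_pos _).le
        _ ≤ 1/4 := hrr_exp u huIcc
      have hev : ∀ᶠ σ in 𝓝 u, gz σ < 1/2 :=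
        (hgzcont.continuousAt (x := u)).eventually_lt continuousAt_const (by linarith)
      obtain ⟨ε, hε, hball⟩ := Metric.eventually_nhds_iff.mp hev
      set b' := min T (u + ε/2) with hb'_def
      have hub' : u < b' := lt_min hu_lt (by linarith)
      have hb'A : b' ∈ A := by
        refine ⟨⟨le_trans huIcc.1 (le_of_lt hub'), min_le_left _ _⟩, ?_⟩
        intro σ hσ
        rcases le_or_gt σ u with h | h
        · exact huA.2 σ ⟨hσ.1, h⟩
        · have : dist σ u < ε := by
            rw [Real.dist_eq, abs_of_pos (by linarith)]
            have : σ ≤ u + ε/2 := le_trans hσ.2 (min_le_right _ _)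
            linarith
          exact le_of_lt (hball this)
      linarith [le_csSup hbddA hb'A]
    intro σ hσ
    exact grw z T ⟨hT, le_rfl⟩ (huT ▸ hmemu) σ hσ
  have htraj : ∀ z, Continuous fun s => τ s z :=
    fun z => continuous_iff_continuousAt.mpr fun s => (hode z s).continuousAt
  -- the difference-quotient sequence
  set r0 : ℝ := rr / (‖ξ0‖ + 1) with hr0_def
  have hr0_pos : 0 < r0 := div_pos hrr_pos (by positivity)
  set sm : ℕ → ℝ := fun m => r0 / ((m:ℝ) + 1) with hsm_def
  have hsm_pos : ∀ m, 0 < sm m := fun m => div_pos hr0_pos (by positivity)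
  have hsm_ne : ∀ m, sm m ≠ 0 := fun m => (hsm_pos m).ne'
  have hsm_le : ∀ m, sm m ≤ r0 := by
    intro m
    rw [hsm_def]
    exact div_le_self hr0_pos.le (by simp)
  set zm : ℕ → Vec n := fun m => y0 + sm m • ξ0 with hzm_def
  have hzm_dist : ∀ m, ‖zm m - y0‖ = sm m * ‖ξ0‖ := by
    intro m
    rw [hzm_def]
    simp [add_sub_cancel_left, norm_smul, abs_of_pos (hsm_pos m)]
  have hzm_rr : ∀ m, ‖zm m - y0‖ ≤ rr := by
    intro m
    rw [hzm_dist m]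
    calc sm m * ‖ξ0‖ ≤ r0 * (‖ξ0‖ + 1) :=
          mul_le_mul (hsm_le m) (by linarith) (norm_nonneg _) hr0_pos.le
    _ = rr := by rw [hr0_def]; field_simp
  have hsm_tendsto0 : Tendsto sm atTop (𝓝 0) := by
    have h1 : Tendsto (fun m : ℕ => r0 * (1 / ((m:ℝ) + 1))) atTop (𝓝 (r0 * 0)) :=
      tendsto_one_div_add_atTop_nhds_zero_nat.const_mul r0
    rw [mul_zero] at h1
    refine h1.congr fun m => ?_
    rw [hsm_def]; ring
  have hsm_tendsto : Tendsto sm atTop (𝓝[≠] (0:ℝ)) :=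
    tendsto_nhdsWithin_of_tendsto_nhds_of_eventually_within _ hsm_tendsto0
      (Eventually.of_forall fun m => hsm_ne m)
  set Cw : ℝ := ‖ξ0‖ * Real.exp (K * T) with hCw_def
  have hCw_nonneg : 0 ≤ Cw := by positivity
  set wseq : ℕ → ℝ → Vec n := fun m σ => (sm m)⁻¹ • (τ σ (zm m) - y σ) with hwseq_def
  have hstay_m : ∀ m, ∀ σ ∈ Icc (0:ℝ) T, ‖τ σ (zm m) - y σ‖ ≤ sm m * (‖ξ0‖ * Real.exp (K * σ)) := by
    intro m σ hσ
    have := stay (zm m) (hzm_rr m) σ hσ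
    rw [hzm_dist m] at this
    calc ‖τ σ (zm m) - y σ‖ ≤ sm m * ‖ξ0‖ * Real.exp (K * σ) := this
    _ = sm m * (‖ξ0‖ * Real.exp (K * σ)) := by ring
  have hwbound : ∀ m, ∀ σ ∈ Icc (0:ℝ) T, ‖wseq m σ‖ ≤ Cw := by
    intro m σ hσ
    rw [hwseq_def]
    simp only [norm_smul, norm_inv, Real.norm_eq_abs, abs_of_pos (hsm_pos m)]
    calc (sm m)⁻¹ * ‖τ σ (zm m) - y σ‖
        ≤ (sm m)⁻¹ * (sm m * (‖ξ0‖ * Real.exp (K * σ))) :=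
          mul_le_mul_of_nonneg_left (hstay_m m σ hσ) (inv_nonneg.mpr (hsm_pos m).le)
    _ = ‖ξ0‖ * Real.exp (K * σ) := by rw [← mul_assoc, inv_mul_cancel₀ (hsm_ne m), one_mul]
    _ ≤ Cw := by
        rw [hCw_def]
        refine mul_le_mul_of_nonneg_left ?_ (norm_nonneg _)
        exact Real.exp_le_exp.mpr (mul_le_mul_of_nonneg_left hσ.2 hK0')
  have htube_m : ∀ m, ∀ σ ∈ Icc (0:ℝ) T, τ σ (zm m) ∈ closedBall (y σ) 1 := by
    intro m σ hσ
    rw [Metric.mem_closedBall, dist_eq_norm]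
    have h1 := stay (zm m) (hzm_rr m) σ hσ
    have h2 : ‖zm m - y0‖ * Real.exp (K * σ) ≤ rr * Real.exp (K * σ) :=
      mul_le_mul_of_nonneg_right (hzm_rr m) (Real.exp_pos _).le
    have h3 := hrr_exp σ hσ
    linarith
  set ψ : ℕ → ℝ → Vec n := fun m σ => (sm m)⁻¹ • (H (σ, τ σ (zm m)) - H (σ, y σ)) with hψ_def
  have hw_deriv : ∀ m σ, HasDerivAt (wseq m) (ψ m σ) σ :=
    fun m σ => ((hode (zm m) σ).sub (hode y0 σ)).const_smul (sm m)⁻¹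
  have hψcont : ∀ m, Continuous (ψ m) := by
    intro m
    refine Continuous.fun_const_smul ?_ _
    exact (hH.continuous.comp (continuous_id.prodMk (htraj (zm m)))).sub
      (hH.continuous.comp (continuous_id.prodMk hycont))
  have hident : ∀ m, ∀ t ∈ Icc (0:ℝ) T, wseq m t = ξ0 + ∫ σ in (0:ℝ)..t, ψ m σ := by
    intro m t ht
    have h1 := intervalIntegral.integral_eq_sub_of_hasDerivAt
      (f := wseq m) (f' := ψ m) (a := 0) (b := t)
      (fun σ _ => hw_deriv m σ) ((hψcont m).intervalIntegrable 0 t)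
    have h0 : wseq m 0 = ξ0 := by
      rw [hwseq_def]
      simp only [hτ0, hy0, hzm_def, add_sub_cancel_left, smul_smul,
        inv_mul_cancel₀ (hsm_ne m), one_smul]
    rw [h1, h0]
    abel
  set B : ℝ → Vec n := fun σ => fderiv ℝ (τ σ) y0 ξ0 with hB_def
  have hwB : ∀ σ, Tendsto (fun m => wseq m σ) atTop (𝓝 (B σ)) := by
    intro σ
    have hpt : y0 + (0:ℝ) • ξ0 = y0 := by simp
    have hinner : HasDerivAt (fun s : ℝ => y0 + s • ξ0) ((1:ℝ) • ξ0) 0 :=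
      ((hasDerivAt_id (0:ℝ)).smul_const ξ0).const_add y0
    rw [one_smul] at hinner
    have houter : HasFDerivAt (τ σ) (fderiv ℝ (τ σ) y0) (y0 + (0:ℝ) • ξ0) := by
      rw [hpt]; exact (hdiff σ y0).hasFDerivAt
    have hcomp : HasDerivAt (fun s : ℝ => τ σ (y0 + s • ξ0)) (B σ) 0 :=
      houter.comp_hasDerivAt 0 hinner
    have hslope := hasDerivAt_iff_tendsto_slope.mp hcomp
    have := hslope.comp hsm_tendsto
    refine this.congr fun m => ?_
    simp only [Function.comp_apply, slope_def_module, sub_zero, hpt, hwseq_def, hzm_def, hy_def]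
  have hψbound : ∀ m, ∀ σ ∈ Icc (0:ℝ) T, ‖ψ m σ‖ ≤ K * Cw := by
    intro m σ hσ
    rw [hψ_def]
    simp only [norm_smul, norm_inv, Real.norm_eq_abs, abs_of_pos (hsm_pos m)]
    have h1 : ‖H (σ, τ σ (zm m)) - H (σ, y σ)‖ ≤ K * ‖τ σ (zm m) - y σ‖ :=
      hLip σ hσ _ (htube_m m σ hσ) _ (Metric.mem_closedBall_self (by norm_num))
    calc (sm m)⁻¹ * ‖H (σ, τ σ (zm m)) - H (σ, y σ)‖
        ≤ (sm m)⁻¹ * (K * ‖τ σ (zm m) - y σ‖) :=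
          mul_le_mul_of_nonneg_left h1 (inv_nonneg.mpr (hsm_pos m).le)
    _ = K * ((sm m)⁻¹ * ‖τ σ (zm m) - y σ‖) := by ring
    _ ≤ K * Cw := by
        refine mul_le_mul_of_nonneg_left ?_ hK0'
        have := hwbound m σ hσ
        rw [hwseq_def] at this
        simpa [norm_smul, norm_inv, Real.norm_eq_abs, abs_of_pos (hsm_pos m)] using this
  have hψg : ∀ σ ∈ Icc (0:ℝ) T,
      Tendsto (fun m => ψ m σ) atTop (𝓝 ((pderiv2 H σ (y σ)) (B σ))) := by
    intro σ hσ
    set D := pderiv2 H σ (y σ) with hD_def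
    have hD := hasFDerivAt_pderiv2 hH σ (y σ)
    set E : Vec n → Vec n := fun u => H (σ, y σ + u) - H (σ, y σ) - D u with hE_def
    have hE0 : E 0 = 0 := by simp [hE_def]
    have hlittleo : E =o[𝓝 0] (fun u => u) := by
      have h1 := hD.isLittleO
      have h2 : Tendsto (fun u : Vec n => y σ + u) (𝓝 0) (𝓝 (y σ)) := by
        have hcadd : Continuous (fun u : Vec n => y σ + u) :=
          continuous_const.add continuous_id
        have := hcadd.tendsto (0 : Vec n)
        simpa using this
      have h3 := h1.comp_tendsto h2
      refine h3.congr (fun u => ?_) (fun u => ?_)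
      · show H (σ, y σ + u) - H (σ, y σ) - D (y σ + u - y σ) = E u
        rw [add_sub_cancel_left]
      · show y σ + u - y σ = u
        rw [add_sub_cancel_left]
    have hφ : Tendsto (fun u : Vec n => ‖E u‖ / ‖u‖) (𝓝 0) (𝓝 0) := by
      refine (Asymptotics.isLittleO_iff_tendsto ?_).mp hlittleo.norm_norm
      intro u hu
      rw [norm_eq_zero.mp hu, hE0, norm_zero]
    set um : ℕ → Vec n := fun m => τ σ (zm m) - y σ with hum_def
    have hsm_w : ∀ m, sm m • wseq m σ = um m := by
      intro m
      rw [hwseq_def, hum_def, smul_smul, mul_inv_cancel₀ (hsm_ne m), one_smul]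
    have hum_bound : ∀ m, ‖um m‖ ≤ sm m * Cw := by
      intro m
      rw [← hsm_w m, norm_smul, Real.norm_eq_abs, abs_of_pos (hsm_pos m)]
      exact mul_le_mul_of_nonneg_left (hwbound m σ hσ) (hsm_pos m).le
    have hum0 : Tendsto um atTop (𝓝 0) := by
      refine squeeze_zero_norm hum_bound ?_
      have := hsm_tendsto0.mul_const Cw
      simpa using this
    have hψ_split : ∀ m, ψ m σ = D (wseq m σ) + (sm m)⁻¹ • E (um m) := by
      intro m
      have hyum : y σ + (τ σ (zm m) - y σ) = τ σ (zm m) := by abel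
      have e1 : E (τ σ (zm m) - y σ)
          = (H (σ, τ σ (zm m)) - H (σ, y σ)) - D (τ σ (zm m) - y σ) := by
        show H (σ, y σ + (τ σ (zm m) - y σ)) - H (σ, y σ) - D (τ σ (zm m) - y σ) = _
        rw [hyum]
      show (sm m)⁻¹ • (H (σ, τ σ (zm m)) - H (σ, y σ))
          = D ((sm m)⁻¹ • (τ σ (zm m) - y σ)) + (sm m)⁻¹ • E (τ σ (zm m) - y σ)
      rw [e1, D.map_smul, smul_sub]
      module
    have h1 : Tendsto (fun m => D (wseq m σ)) atTop (𝓝 (D (B σ))) :=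
      (D.continuous.tendsto _).comp (hwB σ)
    have h2 : Tendsto (fun m => (sm m)⁻¹ • E (um m)) atTop (𝓝 0) := by
      have hgt : Tendsto (fun m => (‖E (um m)‖ / ‖um m‖) * Cw) atTop (𝓝 0) := by
        have := (hφ.comp hum0).mul_const Cw
        simpa using this
      refine squeeze_zero_norm (fun m => ?_) hgt
      · rw [norm_smul, norm_inv, Real.norm_eq_abs, abs_of_pos (hsm_pos m)]
        rcases eq_or_ne (um m) 0 with h | h
        · simp [h, hE0]
        · have hne : ‖um m‖ ≠ 0 := norm_ne_zero_iff.mpr h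
          have hkey : (sm m)⁻¹ * ‖E (um m)‖
              = (‖E (um m)‖ / ‖um m‖) * ((sm m)⁻¹ * ‖um m‖) := by
            field_simp
          rw [hkey]
          refine mul_le_mul_of_nonneg_left ?_ (by positivity)
          calc (sm m)⁻¹ * ‖um m‖ ≤ (sm m)⁻¹ * (sm m * Cw) :=
                mul_le_mul_of_nonneg_left (hum_bound m) (inv_nonneg.mpr (hsm_pos m).le)
          _ = Cw := by rw [← mul_assoc, inv_mul_cancel₀ (hsm_ne m), one_mul]
    have := (h1.add h2).congr fun m => (hψ_split m).symm
    simpa using this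
  refine ⟨Cw, fun t ht => ?_⟩
  constructor
  · exact le_of_tendsto (hwB t).norm (Eventually.of_forall fun m => hwbound m t ht)
  · have hIsub : Set.uIoc (0:ℝ) t ⊆ Icc (0:ℝ) T := by
      rw [Set.uIoc_of_le ht.1]
      exact fun x hx => ⟨le_of_lt hx.1, le_trans hx.2 ht.2⟩
    have hint := intervalIntegral.tendsto_integral_filter_of_dominated_convergence
      (μ := volume) (a := 0) (b := t) (F := ψ)
      (f := fun σ => (pderiv2 H σ (y σ)) (B σ)) (bound := fun _ => K * Cw)
      (Eventually.of_forall fun m => (hψcont m).aestronglyMeasurable)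
      (Eventually.of_forall fun m => ae_of_all _ fun σ hσ => hψbound m σ (hIsub hσ))
      intervalIntegrable_const
      (ae_of_all _ fun σ hσ => hψg σ (hIsub hσ))
    have h2 := hint.const_add ξ0
    have h3 := h2.congr fun m => (hident m t ht).symm
    exact tendsto_nhds_unique (hwB t) h3

theorem flow_fderiv_integral_real {n : ℕ} {H : ℝ × Vec n → Vec n} (hH : ContDiff ℝ (⊤:ℕ∞) H)
    (τ : ℝ → Vec n → Vec n) (hτ0 : ∀ z, τ 0 z = z)
    (hode : ∀ z t, HasDerivAt (fun s => τ s z) (H (t, τ t z)) t)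
    (hdiff : ∀ t, Differentiable ℝ (τ t))
    (y0 ξ0 : Vec n) {T : ℝ} (hT : 0 ≤ T) :
    ∃ C : ℝ, ∀ t ∈ Icc (-T) T,
      ‖fderiv ℝ (τ t) y0 ξ0‖ ≤ C ∧
      fderiv ℝ (τ t) y0 ξ0 = ξ0 + ∫ σ in (0:ℝ)..t,
        (pderiv2 H σ (τ σ y0)) (fderiv ℝ (τ σ) y0 ξ0) := by
  obtain ⟨C₁, hC₁⟩ := flow_fderiv_integral hH τ hτ0 hode hdiff y0 ξ0 hT
  -- reversed data
  set H' : ℝ × Vec n → Vec n := fun p => -H (-p.1, p.2) with hH'_def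
  have hH' : ContDiff ℝ (⊤:ℕ∞) H' := by
    have h1 : ContDiff ℝ (⊤:ℕ∞) (fun p : ℝ × Vec n => ((-p.1, p.2) : ℝ × Vec n)) :=
      (contDiff_fst.neg).prodMk contDiff_snd
    exact (hH.comp h1).neg
  set τ' : ℝ → Vec n → Vec n := fun s z => τ (-s) z with hτ'_def
  have hτ'0 : ∀ z, τ' 0 z = z := by
    intro z
    show τ (-0) z = z
    rw [neg_zero]; exact hτ0 z
  have hode' : ∀ z t, HasDerivAt (fun s => τ' s z) (H' (t, τ' t z)) t := by
    intro z t0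
    have h2 := (hode z (-t0)).scomp t0 (hasDerivAt_neg t0)
    have h3 : HasDerivAt (fun s => τ (-s) z) ((-1:ℝ) • H (-t0, τ (-t0) z)) t0 := h2
    rw [neg_one_smul] at h3
    exact h3
  have hdiff' : ∀ t, Differentiable ℝ (τ' t) := fun t => hdiff (-t)
  obtain ⟨C₂, hC₂⟩ := flow_fderiv_integral hH' τ' hτ'0 hode' hdiff' y0 ξ0 hT
  have hpd : ∀ σ v, pderiv2 H' σ v = -(pderiv2 H (-σ) v) := by
    intro σ v
    have h1 : HasFDerivAt (fun w => H' (σ, w)) (-(pderiv2 H (-σ) v)) v :=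
      (hasFDerivAt_pderiv2 hH (-σ) v).neg
    exact (hasFDerivAt_pderiv2 hH' σ v).unique h1
  have hτ'τ : ∀ s, τ' s = τ (-s) := fun s => rfl
  refine ⟨max C₁ C₂, fun t ht => ?_⟩
  rcases le_or_gt 0 t with h0t | h0t
  · obtain ⟨hb, hi⟩ := hC₁ t ⟨h0t, ht.2⟩
    exact ⟨hb.trans (le_max_left _ _), hi⟩
  · obtain ⟨hb, hi⟩ := hC₂ (-t) ⟨by linarith, by linarith [ht.1]⟩
    have hττ : τ' (-t) = τ t := by rw [hτ'τ, neg_neg]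
    constructor
    · rw [hττ] at hb
      exact hb.trans (le_max_right _ _)
    · rw [hττ] at hi
      rw [hi]
      congr 1
      set G : ℝ → Vec n := fun u => (pderiv2 H u (τ u y0)) (fderiv ℝ (τ u) y0 ξ0) with hG_def
      have heq : ∀ σ, (pderiv2 H' σ (τ' σ y0)) (fderiv ℝ (τ' σ) y0 ξ0)
          = -(G (-σ)) := by
        intro σ
        rw [hpd]
        simp only [ContinuousLinearMap.neg_apply, hτ'τ, hG_def]
      calc ∫ σ in (0:ℝ)..(-t), (pderiv2 H' σ (τ' σ y0)) (fderiv ℝ (τ' σ) y0 ξ0)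
          = ∫ σ in (0:ℝ)..(-t), -(G (-σ)) := intervalIntegral.integral_congr (fun σ _ => heq σ)
        _ = -∫ σ in (0:ℝ)..(-t), G (-σ) := intervalIntegral.integral_neg
        _ = -∫ σ in -(-t)..(-0:ℝ), G σ := by
            rw [intervalIntegral.integral_comp_neg (a := 0) (b := -t) (f := G)]
        _ = ∫ σ in (0:ℝ)..t, G σ := by
            rw [neg_neg, neg_zero, intervalIntegral.integral_symm, neg_neg]

theorem flow_fderiv_ode {n : ℕ} {H : ℝ × Vec n → Vec n} (hH : ContDiff ℝ (⊤:ℕ∞) H)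
    (τ : ℝ → Vec n → Vec n) (hτ0 : ∀ z, τ 0 z = z)
    (hode : ∀ z t, HasDerivAt (fun s => τ s z) (H (t, τ t z)) t)
    (hdiff : ∀ t, Differentiable ℝ (τ t))
    (y0 ξ0 : Vec n) (t : ℝ) :
    HasDerivAt (fun s => fderiv ℝ (τ s) y0 ξ0)
      ((pderiv2 H t (τ t y0)) (fderiv ℝ (τ t) y0 ξ0)) t := by
  set B : ℝ → Vec n := fun s => fderiv ℝ (τ s) y0 ξ0 with hB_def
  set Φ : ℝ → Vec n →L[ℝ] Vec n := fun u => pderiv2 H u (τ u y0) with hΦ_def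
  set G : ℝ → Vec n := fun u => Φ u (B u) with hG_def
  have htraj : ∀ z, Continuous fun s => τ s z :=
    fun z => continuous_iff_continuousAt.mpr fun s => (hode z s).continuousAt
  have hident : ∀ s : ℝ, B s = ξ0 + ∫ σ in (0:ℝ)..s, G σ := by
    intro s
    obtain ⟨C, hC⟩ := flow_fderiv_integral_real hH τ hτ0 hode hdiff y0 ξ0
      (T := |s|) (abs_nonneg s)
    exact (hC s ⟨neg_abs_le s, le_abs_self s⟩).2
  have hΦcont : Continuous Φ :=
    (continuous_pderiv2 hH).comp (continuous_id.prodMk (htraj y0))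
  -- B is a pointwise limit of continuous functions, hence measurable
  have hBmeas : AEStronglyMeasurable B (volume : Measure ℝ) := by
    set sm : ℕ → ℝ := fun m => ((m:ℝ) + 1)⁻¹ with hsm_def
    have hsm_pos : ∀ m, 0 < sm m := fun m => by positivity
    have hsm_tendsto0 : Tendsto sm atTop (𝓝 0) := by
      have : Tendsto (fun m : ℕ => 1 / ((m : ℝ) + 1)) atTop (𝓝 0) := tendsto_one_div_add_atTop_nhds_zero_nat
      refine this.congr fun m => ?_
      rw [hsm_def, one_div]
    have hsm_tendsto : Tendsto sm atTop (𝓝[≠] (0:ℝ)) :=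
      tendsto_nhdsWithin_of_tendsto_nhds_of_eventually_within _ hsm_tendsto0
        (Eventually.of_forall fun m => (hsm_pos m).ne')
    set q : ℕ → ℝ → Vec n := fun m s => (sm m)⁻¹ • (τ s (y0 + sm m • ξ0) - τ s y0) with hq_def
    have hqcont : ∀ m, Continuous (q m) :=
      fun m => (((htraj (y0 + sm m • ξ0)).sub (htraj y0)).fun_const_smul _)
    have hqB : ∀ s, Tendsto (fun m => q m s) atTop (𝓝 (B s)) := by
      intro s
      have hpt : y0 + (0:ℝ) • ξ0 = y0 := by simp
      have hinner : HasDerivAt (fun r : ℝ => y0 + r • ξ0) ((1:ℝ) • ξ0) 0 :=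
        ((hasDerivAt_id (0:ℝ)).smul_const ξ0).const_add y0
      rw [one_smul] at hinner
      have houter : HasFDerivAt (τ s) (fderiv ℝ (τ s) y0) (y0 + (0:ℝ) • ξ0) := by
        rw [hpt]; exact (hdiff s y0).hasFDerivAt
      have hcomp : HasDerivAt (fun r : ℝ => τ s (y0 + r • ξ0)) (B s) 0 :=
        houter.comp_hasDerivAt 0 hinner
      have hslope := (hasDerivAt_iff_tendsto_slope.mp hcomp).comp hsm_tendsto
      refine hslope.congr fun m => ?_
      simp only [Function.comp_apply, slope_def_module, sub_zero, hpt, hq_def]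
    exact aestronglyMeasurable_of_tendsto_ae atTop
      (fun m => (hqcont m).aestronglyMeasurable) (ae_of_all _ hqB)
  -- G is interval integrable on every interval
  have hGmeas : AEStronglyMeasurable G (volume : Measure ℝ) :=
    isBoundedBilinearMap_apply.continuous.comp_aestronglyMeasurable
      ((hΦcont.aestronglyMeasurable).prodMk hBmeas)
  have hGint : ∀ a b : ℝ, IntervalIntegrable G volume a b := by
    intro a b
    set T : ℝ := max |a| |b| with hT_def
    obtain ⟨C, hC⟩ := flow_fderiv_integral_real hH τ hτ0 hode hdiff y0 ξ0
      (T := T) (le_trans (abs_nonneg a) (le_max_left _ _))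
    obtain ⟨CΦ, hCΦ⟩ := (isCompact_Icc (a := -T) (b := T)).exists_bound_of_continuousOn
      hΦcont.continuousOn
    have hsub : Set.uIoc a b ⊆ Icc (-T) T := by
      have haT : -T ≤ a := by
        have h1 : |a| ≤ T := le_max_left _ _
        have h2 := neg_abs_le a
        linarith
      have hbT : -T ≤ b := by
        have h1 : |b| ≤ T := le_max_right _ _
        have h2 := neg_abs_le b
        linarith
      have haT' : a ≤ T := le_trans (le_abs_self a) (le_max_left _ _)
      have hbT' : b ≤ T := le_trans (le_abs_self b) (le_max_right _ _)
      intro x hx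
      exact ⟨le_trans (le_min haT hbT) (le_of_lt hx.1), le_trans hx.2 (max_le haT' hbT')⟩
    rw [intervalIntegrable_iff]
    haveI : IsFiniteMeasure (volume.restrict (Set.uIoc a b)) := by
      constructor
      rw [Measure.restrict_apply_univ]
      exact measure_Ioc_lt_top
    refine MeasureTheory.Integrable.mono' (g := fun _ => CΦ * (max C 0))
      (integrable_const _) hGmeas.restrict ?_
    rw [ae_restrict_iff' measurableSet_uIoc]
    refine ae_of_all _ fun x hx => ?_
    have hxI := hsub hx
    have h1 : ‖Φ x‖ ≤ CΦ := hCΦ x hxI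
    have h2 : ‖B x‖ ≤ max C 0 := le_trans (hC x hxI).1 (le_max_left _ _)
    calc ‖G x‖ ≤ ‖Φ x‖ * ‖B x‖ := (Φ x).le_opNorm (B x)
    _ ≤ CΦ * max C 0 :=
        mul_le_mul h1 h2 (norm_nonneg _) (le_trans (norm_nonneg _) h1)
  have hBcont : Continuous B := by
    have hprim : Continuous fun s => ∫ σ in (0:ℝ)..s, G σ :=
      intervalIntegral.continuous_primitive hGint 0
    exact (continuous_const.add hprim).congr fun s => (hident s).symm
  have hGcont : Continuous G :=
    isBoundedBilinearMap_apply.continuous.comp (hΦcont.prodMk hBcont)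
  have hftc : HasDerivAt (fun s => ∫ σ in (0:ℝ)..s, G σ) (G t) t :=
    intervalIntegral.integral_hasDerivAt_right (hGint 0 t)
      ⟨Set.univ, Filter.univ_mem, hGcont.aestronglyMeasurable.restrict⟩ hGcont.continuousAt
  have h2 := hftc.const_add ξ0
  have hBeq : B = fun s => ξ0 + ∫ σ in (0:ℝ)..s, G σ := funext hident
  show HasDerivAt B (G t) t
  rw [hBeq]
  exact h2

theorem ode_unique_linear {n : ℕ} (Φ : ℝ → (Vec n →L[ℝ] Vec n)) (hΦ : Continuous Φ)
    (f g : ℝ → Vec n)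
    (hf : ∀ t, HasDerivAt f (Φ t (f t)) t)
    (hg : ∀ t, HasDerivAt g (Φ t (g t)) t)
    (h0 : f 0 = g 0) : ∀ t, f t = g t := by
  intro t
  set a : ℝ := -(|t| + 1) with ha_def
  set b : ℝ := |t| + 1 with hb_def
  have hab : a < b := by
    rw [ha_def, hb_def]
    have := abs_nonneg t
    linarith
  set clamp : ℝ → ℝ := fun s => max a (min b s) with hclamp_def
  have hclamp_mem : ∀ s, clamp s ∈ Icc a b := by
    intro s
    refine ⟨le_max_left _ _, max_le (le_of_lt hab) (min_le_left _ _)⟩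
  have hclamp_id : ∀ s ∈ Ioo a b, clamp s = s := by
    intro s hs
    show a ⊔ (b ⊓ s) = s
    rw [min_eq_right (le_of_lt hs.2), max_eq_right (le_of_lt hs.1)]
  obtain ⟨CΦ, hCΦ⟩ := (isCompact_Icc (a := a) (b := b)).exists_bound_of_continuousOn
    hΦ.continuousOn
  have hCΦ0 : 0 ≤ CΦ := le_trans (norm_nonneg _) (hCΦ a ⟨le_rfl, le_of_lt hab⟩)
  set v : ℝ → Vec n → Vec n := fun s u => Φ (clamp s) u with hv_def
  have hlip : ∀ s, LipschitzWith CΦ.toNNReal (v s) := by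
    intro s
    refine (Φ (clamp s)).lipschitz.weaken ?_
    rw [← NNReal.coe_le_coe, coe_nnnorm, Real.coe_toNNReal _ hCΦ0]
    exact hCΦ _ (hclamp_mem s)
  have h0mem : (0:ℝ) ∈ Ioo a b := by
    constructor
    · rw [ha_def, hb_def]
      have := abs_nonneg t
      linarith
    · rw [hb_def]
      positivity
  have hEq := ODE_solution_unique_of_mem_Icc (v := v) (s := fun _ => Set.univ)
    (fun s _ => (hlip s).lipschitzOnWith)
    h0mem
    (fun s _ => (hf s).continuousAt.continuousWithinAt)
    (fun s hs => by rw [hv_def]; simp only; rw [hclamp_id s hs]; exact hf s)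
    (fun _ _ => Set.mem_univ _)
    (fun s _ => (hg s).continuousAt.continuousWithinAt)
    (fun s hs => by rw [hv_def]; simp only; rw [hclamp_id s hs]; exact hg s)
    (fun _ _ => Set.mem_univ _)
    h0
  refine hEq ⟨?_, ?_⟩
  · rw [ha_def, hb_def]
    have := neg_abs_le t
    linarith
  · rw [hb_def]
    have := le_abs_self t
    linarith

lemma sum_algebra {n : ℕ} (P1 : Fin n → ℝ) (P2 : Fin n → ℝ) (P3 : Fin n → Fin n → ℝ)
    (Nc : Fin n → Fin n → ℝ) (X cd : Fin n → ℝ) :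
    ∑ j, (P1 j - (∑ k, Nc k j * P2 k) + ∑ k, P3 j k * X k) * cd j
      = ((∑ j, cd j * P1 j) + ∑ k, (-(∑ j, Nc k j * cd j)) * P2 k)
        - (-(∑ j, cd j * (∑ k, X k * P3 j k))) := by
  have h1 : ∑ j, (P1 j - (∑ k, Nc k j * P2 k) + ∑ k, P3 j k * X k) * cd j
      = (∑ j, P1 j * cd j) - (∑ j, ∑ k, Nc k j * P2 k * cd j)
        + ∑ j, ∑ k, P3 j k * X k * cd j := by
    rw [← Finset.sum_sub_distrib, ← Finset.sum_add_distrib]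
    refine Finset.sum_congr rfl fun j _ => ?_
    rw [add_mul, sub_mul, Finset.sum_mul, Finset.sum_mul]
  rw [h1]
  rw [Finset.sum_comm (γ := Fin n) (f := fun j k => Nc k j * P2 k * cd j)]
  have h2 : ∀ k, ∑ j, Nc k j * P2 k * cd j = -((-(∑ j, Nc k j * cd j)) * P2 k) := by
    intro k
    rw [neg_mul, neg_neg, Finset.sum_mul]
    exact Finset.sum_congr rfl fun j _ => by ring
  have h3 : ∀ j, ∑ k, P3 j k * X k * cd j = cd j * (∑ k, X k * P3 j k) := by
    intro j
    rw [Finset.mul_sum]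
    exact Finset.sum_congr rfl fun k _ => by ring
  simp only [h2, h3, Finset.sum_neg_distrib]
  have h4 : ∀ j, P1 j * cd j = cd j * P1 j := fun j => mul_comm _ _
  simp only [h4]
  ring

lemma clm_apply_eq_sum_mul {m : ℕ} (f : Vec m →L[ℝ] ℝ) (u : Vec m) :
    f u = ∑ k, u k * f (Pi.single k 1) := by
  have hu : u = ∑ k, u k • (Pi.single k 1 : Vec m) := by
    funext i'
    simp [Finset.sum_apply, Pi.single_apply]
  conv_lhs => rw [hu]
  rw [map_sum]
  simp [smul_eq_mul]

lemma contDiff_H {n : ℕ} (N : Vec n → Vec n → Fin n → Fin n → ℝ)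
    (hN : ContDiff ℝ (⊤:ℕ∞) (fun q : Vec n × Vec n => (fun i j => N q.1 q.2 i j :
      Fin n → Fin n → ℝ)))
    (c : ℝ → Vec n) (hc : ContDiff ℝ (⊤:ℕ∞) c) :
    ContDiff ℝ (⊤:ℕ∞) (fun p : ℝ × Vec n =>
      (fun i => -(∑ j, N (c p.1) p.2 i j * deriv c p.1 j) : Vec n)) := by
  have hc' : ContDiff ℝ (⊤:ℕ∞) (deriv c) := (contDiff_infty_iff_deriv.mp hc).2
  rw [contDiff_pi]
  intro i
  refine ContDiff.neg ?_
  refine ContDiff.sum fun j _ => ContDiff.mul ?_ ?_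
  · have h1 : ContDiff ℝ (⊤:ℕ∞) (fun p : ℝ × Vec n => ((c p.1, p.2) : Vec n × Vec n)) :=
      (hc.comp contDiff_fst).prodMk contDiff_snd
    exact (contDiff_pi.mp (contDiff_pi.mp hN i) j).comp h1
  · exact (contDiff_pi.mp hc' j).comp contDiff_fst

theorem big_identity {n : ℕ} (N : Vec n → Vec n → Fin n → Fin n → ℝ)
    (hN : ContDiff ℝ (⊤:ℕ∞) (fun q : Vec n × Vec n => (fun i j => N q.1 q.2 i j :
      Fin n → Fin n → ℝ)))
    (c : ℝ → Vec n) (hc : ContDiff ℝ (⊤:ℕ∞) c)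
    (ξ : Vec n → Vec n → Vec n)
    (hξ : ContDiff ℝ (⊤:ℕ∞) (fun q : Vec n × Vec n => ξ q.1 q.2))
    (t : ℝ) (yt : Vec n) (i : Fin n) :
    ∑ j, (fderiv ℝ (fun x' => ξ x' yt i) (c t) (Pi.single j 1)
        - ∑ k, N (c t) yt k j * fderiv ℝ (fun y' => ξ (c t) y' i) yt (Pi.single k 1)
        + ∑ k, fderiv ℝ (fun y' => N (c t) y' i j) yt (Pi.single k 1) * ξ (c t) yt k)
        * deriv c t j
    = ((fderiv ℝ (fun q : Vec n × Vec n => ξ q.1 q.2) (c t, yt))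
        (deriv c t, fun i' => -(∑ j, N (c t) yt i' j * deriv c t j))) i
      - ((pderiv2 (fun p : ℝ × Vec n =>
          (fun i' => -(∑ j, N (c p.1) p.2 i' j * deriv c p.1 j) : Vec n)) t yt)
          (ξ (c t) yt)) i := by
  have hξd : Differentiable ℝ (fun q : Vec n × Vec n => ξ q.1 q.2) :=
    hξ.differentiable (by simp)
  set Dξ := fderiv ℝ (fun q : Vec n × Vec n => ξ q.1 q.2) (c t, yt) with hDξ_def
  -- partial derivative in x
  have hA : ∀ j, fderiv ℝ (fun x' => ξ x' yt i) (c t) (Pi.single j 1)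
      = (Dξ ((Pi.single j 1 : Vec n), (0 : Vec n))) i := by
    intro j
    have hinc : HasFDerivAt (fun x' : Vec n => ((x', yt) : Vec n × Vec n))
        (ContinuousLinearMap.inl ℝ (Vec n) (Vec n)) (c t) := hasFDerivAt_prodMk_left (c t) yt
    have h1 : HasFDerivAt (fun x' : Vec n => ξ x' yt)
        (Dξ.comp (ContinuousLinearMap.inl ℝ (Vec n) (Vec n))) (c t) :=
      by have h := HasFDerivAt.comp (c t) (hξd (c t, yt)).hasFDerivAt hinc; exact h
    have h2 : HasFDerivAt (fun x' : Vec n => ξ x' yt i)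
        ((ContinuousLinearMap.proj i : Vec n →L[ℝ] ℝ).comp
          (Dξ.comp (ContinuousLinearMap.inl ℝ (Vec n) (Vec n)))) (c t) :=
      HasFDerivAt.comp (c t)
        ((ContinuousLinearMap.proj i : Vec n →L[ℝ] ℝ).hasFDerivAt) h1
    rw [h2.fderiv]
    simp
  -- partial derivative in y
  have hB : ∀ (_k : Fin n), fderiv ℝ (fun y' => ξ (c t) y' i) yt
      = ((ContinuousLinearMap.proj i : Vec n →L[ℝ] ℝ).comp
          (Dξ.comp (ContinuousLinearMap.inr ℝ (Vec n) (Vec n)))) := by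
    intro _k
    have hinc : HasFDerivAt (fun y' : Vec n => (((c t), y') : Vec n × Vec n))
        (ContinuousLinearMap.inr ℝ (Vec n) (Vec n)) yt := hasFDerivAt_prodMk_right (c t) yt
    have h1 : HasFDerivAt (fun y' : Vec n => ξ (c t) y')
        (Dξ.comp (ContinuousLinearMap.inr ℝ (Vec n) (Vec n))) yt :=
      HasFDerivAt.comp yt (hξd (c t, yt)).hasFDerivAt hinc
    have h2 : HasFDerivAt (fun y' : Vec n => ξ (c t) y' i)
        ((ContinuousLinearMap.proj i : Vec n →L[ℝ] ℝ).comp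
          (Dξ.comp (ContinuousLinearMap.inr ℝ (Vec n) (Vec n)))) yt :=
      HasFDerivAt.comp yt
        ((ContinuousLinearMap.proj i : Vec n →L[ℝ] ℝ).hasFDerivAt) h1
    exact h2.fderiv
  have hB' : ∀ k, fderiv ℝ (fun y' => ξ (c t) y' i) yt (Pi.single k 1)
      = (Dξ ((0 : Vec n), (Pi.single k 1 : Vec n))) i := by
    intro k
    rw [hB k]
    simp
  -- differentiability of the connection coefficients in y
  have hNc : ∀ (i' j : Fin n), ContDiff ℝ (⊤:ℕ∞) (fun q : Vec n × Vec n => N q.1 q.2 i' j) :=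
    fun i' j => contDiff_pi.mp (contDiff_pi.mp hN i') j
  have hNd : ∀ (i' j : Fin n), DifferentiableAt ℝ (fun y' => N (c t) y' i' j) yt := by
    intro i' j
    have hin : DifferentiableAt ℝ (fun y' : Vec n => (((c t), y') : Vec n × Vec n)) yt :=
      (differentiableAt_const _).prodMk differentiableAt_id
    exact ((hNc i' j).differentiable (by simp) _).comp yt hin
  set Lf : Fin n → Fin n → (Vec n →L[ℝ] ℝ) :=
    fun i' j => fderiv ℝ (fun y' => N (c t) y' i' j) yt with hLf_def
  -- explicit form of pderiv2 of H
  set H : ℝ × Vec n → Vec n := fun p =>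
    (fun i' => -(∑ j, N (c p.1) p.2 i' j * deriv c p.1 j) : Vec n) with hH_def
  have hH : ContDiff ℝ (⊤:ℕ∞) H := contDiff_H N hN c hc
  have hfull : HasFDerivAt (fun w => H (t, w))
      (ContinuousLinearMap.pi fun i' => -(∑ j, (deriv c t j) • Lf i' j)) yt := by
    rw [hasFDerivAt_pi']
    intro i'
    have hj : ∀ j, HasFDerivAt (fun w => N (c t) w i' j * deriv c t j)
        ((deriv c t j) • Lf i' j) yt :=
      fun j => ((hNd i' j).hasFDerivAt).mul_const (deriv c t j)
    have hsum : HasFDerivAt (fun w => ∑ j, N (c t) w i' j * deriv c t j)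
        (∑ j, (deriv c t j) • Lf i' j) yt := HasFDerivAt.fun_sum (fun j _ => hj j)
    have hneg := hsum.neg
    convert hneg using 1
    · rfl
    · ext x; simp
  have hpd_eq : pderiv2 H t yt
      = ContinuousLinearMap.pi fun i' => -(∑ j, (deriv c t j) • Lf i' j) :=
    (hasFDerivAt_pderiv2 hH t yt).unique hfull
  have hD : (pderiv2 H t yt (ξ (c t) yt)) i
      = -(∑ j, deriv c t j * (∑ k, ξ (c t) yt k * Lf i j (Pi.single k 1))) := by
    rw [hpd_eq]
    simp only [ContinuousLinearMap.pi_apply, ContinuousLinearMap.neg_apply,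
      ContinuousLinearMap.coe_sum', Finset.sum_apply, ContinuousLinearMap.coe_smul',
      Pi.smul_apply, smul_eq_mul]
    congr 1
    refine Finset.sum_congr rfl fun j _ => ?_
    congr 1
    exact clm_apply_eq_sum_mul (Lf i j) _
  -- decomposition of the full derivative
  have hC : (Dξ (deriv c t, fun i' => -(∑ j, N (c t) yt i' j * deriv c t j))) i
      = (∑ j, deriv c t j * (Dξ ((Pi.single j 1 : Vec n), (0:Vec n))) i)
        + ∑ k, (-(∑ j, N (c t) yt k j * deriv c t j)) * (Dξ ((0:Vec n), Pi.single k 1)) i := by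
    set hv : Vec n := fun i' => -(∑ j, N (c t) yt i' j * deriv c t j) with hhv_def
    have hsplit : ((deriv c t, hv) : Vec n × Vec n) = (deriv c t, 0) + (0, hv) := by
      simp
    rw [hsplit, map_add]
    have h1 : (Dξ ((deriv c t, 0) : Vec n × Vec n)) i
        = ∑ j, deriv c t j * (Dξ ((Pi.single j 1 : Vec n), (0:Vec n))) i := by
      have := clm_apply_eq_sum_mul
        (((ContinuousLinearMap.proj i).comp Dξ).comp
          (ContinuousLinearMap.inl ℝ (Vec n) (Vec n))) (deriv c t)
      simpa using this
    have h2 : (Dξ (((0 : Vec n), hv) : Vec n × Vec n)) i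
        = ∑ k, hv k * (Dξ ((0:Vec n), Pi.single k 1)) i := by
      have := clm_apply_eq_sum_mul
        (((ContinuousLinearMap.proj i).comp Dξ).comp
          (ContinuousLinearMap.inr ℝ (Vec n) (Vec n))) hv
      simpa using this
    simp only [Pi.add_apply]
    rw [h1, h2]
  simp only [hA, hB', hD, hC]
  exact sum_algebra (fun j => (Dξ ((Pi.single j 1 : Vec n), (0:Vec n))) i)
    (fun k => (Dξ ((0:Vec n), Pi.single k 1)) i)
    (fun j k => Lf i j (Pi.single k 1))
    (fun k j => N (c t) yt k j) (ξ (c t) yt) (deriv c t)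


set_option maxHeartbeats 1000000 in
/-- along a curve `γ = x(t)` with parallel vector field `y(t) = τ_t y(0)`
starting on the indicatrix, a vertical vector field `ξ_t = ξ(x(t), y(t))` coincides with
the Berwald translate `(τ_t)_* ξ₀ ∘ τ_t⁻¹` for all `t` if and only if its horizontal Berwald
covariant derivative along the curve vanishes:
`(∂ξ^i/∂x^j − G^k_j ∂ξ^i/∂y^k + G^i_{jk} ξ^k) ẋ^j = 0`. -/
theorem berwald_translate_iff_covariant_derivative_zero {n : ℕ}
    (N : Vec n → Vec n → Fin n → Fin n → ℝ)
    (hN : ContDiff ℝ (⊤ : ℕ∞) (fun q : Vec n × Vec n => (fun i j => N q.1 q.2 i j :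
      Fin n → Fin n → ℝ)))
    (F : Vec n → Vec n → ℝ)
    (c : ℝ → Vec n) (hc : ContDiff ℝ (⊤ : ℕ∞) c)
    (τ : ℝ → Vec n → Vec n) (hτ : IsParallelTransport N c τ)
    (hτsm : ∀ t, ContDiff ℝ (⊤ : ℕ∞) (τ t))
    -- `y t = τ_t y(0)` is the parallel vector field along `c`, starting on the indicatrix:
    (y : ℝ → Vec n) (hy : ∀ t, y t = τ t (y 0))
    (hy0 : F (c 0) (y 0) = 1)
    (hpar : ∀ t, HasDerivAt y (fun i => -(∑ j, N (c t) (y t) i j * deriv c t j)) t)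
    -- a vertical vector field `ξ`, considered along `(x(t), y(t))`:
    (ξ : Vec n → Vec n → Vec n)
    (hξ : ContDiff ℝ (⊤ : ℕ∞) (fun q : Vec n × Vec n => ξ q.1 q.2)) :
    -- `ξ` is parallel (equal to the Berwald translate of its initial value) along the curve
    (∀ t, ξ (c t) (y t) = fderiv ℝ (τ t) (y 0) (ξ (c 0) (y 0)))
      ↔
    -- iff the Berwald horizontal covariant derivative of `ξ` along the curve vanishes:
    (∀ t (i : Fin n),
      ∑ j, (fderiv ℝ (fun x' => ξ x' (y t) i) (c t) (Pi.single j 1)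
        - ∑ k, N (c t) (y t) k j * fderiv ℝ (fun y' => ξ (c t) y' i) (y t) (Pi.single k 1)
        + ∑ k, fderiv ℝ (fun y' => N (c t) y' i j) (y t) (Pi.single k 1) * ξ (c t) (y t) k)
        * deriv c t j = 0) := by
  classical
  set H : ℝ × Vec n → Vec n := fun p =>
    (fun i => -(∑ j, N (c p.1) p.2 i j * deriv c p.1 j) : Vec n) with hH_def
  have hH : ContDiff ℝ (⊤:ℕ∞) H := contDiff_H N hN c hc
  have hodeτ : ∀ z t, HasDerivAt (fun s => τ s z) (H (t, τ t z)) t := fun z t => hτ.2 z t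
  have hdiffτ : ∀ t, Differentiable ℝ (τ t) :=
    fun t => (hτsm t).differentiable (by simp)
  set ξ0 : Vec n := ξ (c 0) (y 0) with hξ0_def
  set B : ℝ → Vec n := fun s => fderiv ℝ (τ s) (y 0) ξ0 with hB_def
  have hyτ : ∀ s, τ s (y 0) = y s := fun s => (hy s).symm
  set Φ : ℝ → (Vec n →L[ℝ] Vec n) := fun s => pderiv2 H s (y s) with hΦ_def
  have hBode : ∀ t, HasDerivAt B (Φ t (B t)) t := by
    intro t
    have h := flow_fderiv_ode hH τ hτ.1 hodeτ hdiffτ (y 0) ξ0 t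
    rw [hyτ t] at h
    exact h
  have hB0 : B 0 = ξ0 := by
    show fderiv ℝ (τ 0) (y 0) ξ0 = ξ0
    rw [show τ 0 = fun z => z from funext hτ.1, fderiv_id']
    rfl
  set A : ℝ → Vec n := fun t => ξ (c t) (y t) with hA_def
  have hξd : Differentiable ℝ (fun q : Vec n × Vec n => ξ q.1 q.2) :=
    hξ.differentiable (by simp)
  have hcd : Differentiable ℝ c := hc.differentiable (by simp)
  have hyd : ∀ t, HasDerivAt y (H (t, y t)) t := fun t => hpar t
  set Dξ : ℝ → (Vec n × Vec n →L[ℝ] Vec n) :=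
    fun t => fderiv ℝ (fun q : Vec n × Vec n => ξ q.1 q.2) (c t, y t) with hDξ_def
  have hAd : ∀ t, HasDerivAt A ((Dξ t) (deriv c t, H (t, y t))) t := by
    intro t
    have hq : HasDerivAt (fun s => ((c s, y s) : Vec n × Vec n))
        ((deriv c t, H (t, y t))) t := ((hcd t).hasDerivAt).prodMk (hyd t)
    exact HasFDerivAt.comp_hasDerivAt t (hξd (c t, y t)).hasFDerivAt hq
  have hkey : ∀ t i,
      ∑ j, (fderiv ℝ (fun x' => ξ x' (y t) i) (c t) (Pi.single j 1)
        - ∑ k, N (c t) (y t) k j * fderiv ℝ (fun y' => ξ (c t) y' i) (y t) (Pi.single k 1)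
        + ∑ k, fderiv ℝ (fun y' => N (c t) y' i j) (y t) (Pi.single k 1) * ξ (c t) (y t) k)
        * deriv c t j
      = ((Dξ t) (deriv c t, H (t, y t))) i - ((Φ t) (A t)) i := by
    intro t i
    exact big_identity N hN c hc ξ hξ t (y t) i
  constructor
  · intro hL t i
    have hAeqB : A = B := funext hL
    have h1 := hAd t
    have h2 := hBode t
    rw [← hAeqB] at h2
    have h3 : (Dξ t) (deriv c t, H (t, y t)) = Φ t (A t) := h1.unique h2
    rw [hkey t i, h3, sub_self]
  · intro hR t
    have hAode : ∀ s, HasDerivAt A (Φ s (A s)) s := by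
      intro s
      have h1 := hAd s
      have h2 : (Dξ s) (deriv c s, H (s, y s)) = Φ s (A s) := by
        funext i
        have h3 := (hkey s i).symm.trans (hR s i)
        have h4 := sub_eq_zero.mp h3
        exact h4
      rwa [h2] at h1
    have ycont : Continuous y :=
      continuous_iff_continuousAt.mpr fun s => (hyd s).continuousAt
    have hΦc : Continuous Φ :=
      (continuous_pderiv2 hH).comp (continuous_id.prodMk ycont)
    have hAB0 : A 0 = B 0 := by
      rw [hB0]
    exact ode_unique_linear Φ hΦc A B hAode hBode hAB0 t
end
end
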